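/- Let T be a finite set, let R be a symmetric relation on T, and let C_1, …, C_N be pairwise disjoint nonempty finite sets whose union is T, such that x R y whenever x ∈ C_i, y ∈ C_j with i ≠ j (elements of different cliques are related). Let M = max_i |C_i| and assume |C_1| = M. Then there exist pairwise disjoint sets D_1, …, D_M whose union is T such that |D_j ∩ C_i| ≤ 1 for all i, j and |D_j ∩ C_1| = 1 for all j; consequently every pair of distinct elements of each D_j satisfies R, i.e. each D_j is a completely R-related (completely anticommuting) set that meets the largest clique C_1 in exactly one element. (This is the construction reducing any noncontextual Hamiltonian to a commuting Hamiltonian.) -/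

import Mathlib

open Finset

/-- Reduction of a noncontextual Hamiltonian to a commuting Hamiltonian: if the finite
set `T` partitions into disjoint nonempty cliques `C 1, …, C N` with elements of
different cliques related by the symmetric relation `R`, and `C 1` is a largest clique
of size `M`, then `T` partitions into `M` disjoint sets `D j`, each meeting every clique
at most once and the largest clique exactly once; consequently each `D j` is completely
`R`-related. -/
theorem noncontextual_hitting_set_partition {α : Type*} [DecidableEq α]
    (T : Finset α) (R : α → α → Prop) (hRsymm : ∀ x y, R x y → R y x)
    (N : ℕ) (hN : 1 ≤ N) (C : Fin N → Finset α)
    (hCne : ∀ i, (C i).Nonempty)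
    (hCdisj : ∀ i j, i ≠ j → Disjoint (C i) (C j))
    (hCcover : (univ : Finset (Fin N)).biUnion C = T)
    (hRcross : ∀ i j, i ≠ j → ∀ x ∈ C i, ∀ y ∈ C j, R x y)
    (M : ℕ) (hM : M = (univ : Finset (Fin N)).sup (fun i => (C i).card))
    (hC1max : (C ⟨0, hN⟩).card = M) :
    ∃ D : Fin M → Finset α,
      (∀ j j', j ≠ j' → Disjoint (D j) (D j')) ∧
      (univ : Finset (Fin M)).biUnion D = T ∧
      (∀ j i, (D j ∩ C i).card ≤ 1) ∧
      (∀ j, (D j ∩ C ⟨0, hN⟩).card = 1) ∧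
      (∀ j, ∀ x ∈ D j, ∀ y ∈ D j, x ≠ y → R x y) := by
  classical
  -- index of x within its clique
  set g : α → ℕ := fun x => ∑ i : Fin N, if x ∈ C i then (C i).toList.idxOf x else 0
    with hg
  have hg_eq : ∀ i, ∀ x ∈ C i, g x = (C i).toList.idxOf x := by
    intro i x hx
    rw [hg]
    simp only
    rw [Finset.sum_eq_single i]
    · simp [hx]
    · intro i' _ hne
      have : x ∉ C i' := fun hx' =>
        Finset.disjoint_left.1 (hCdisj i' i hne) hx' hx
      simp [this]
    · simp
  have hmem_clique : ∀ x ∈ T, ∃ i, x ∈ C i := by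
    intro x hx
    rw [← hCcover] at hx
    simpa using Finset.mem_biUnion.mp hx
  have hg_lt : ∀ x ∈ T, g x < M := by
    intro x hx
    obtain ⟨i, hi⟩ := hmem_clique x hx
    rw [hg_eq i x hi]
    calc (C i).toList.idxOf x < (C i).toList.length :=
          List.idxOf_lt_length_iff.2 (Finset.mem_toList.2 hi)
      _ = (C i).card := Finset.length_toList _
      _ ≤ M := hM ▸ Finset.le_sup (f := fun i => (C i).card) (Finset.mem_univ i)
  refine ⟨fun j => T.filter (fun x => g x = (j : ℕ)), ?_, ?_, ?_, ?_, ?_⟩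
  · intro j j' hne
    refine Finset.disjoint_left.2 ?_
    intro x hx hx'
    simp only [Finset.mem_filter] at hx hx'
    exact hne (Fin.ext (hx.2 ▸ hx'.2))
  · apply Finset.Subset.antisymm
    · intro x hx
      obtain ⟨j, _, hj⟩ := Finset.mem_biUnion.mp hx
      exact (Finset.mem_filter.mp hj).1
    · intro x hx
      exact Finset.mem_biUnion.mpr ⟨⟨g x, hg_lt x hx⟩, Finset.mem_univ _,
        Finset.mem_filter.mpr ⟨hx, rfl⟩⟩
  · intro j i
    rw [Finset.card_le_one]
    intro a ha b hb
    simp only [Finset.mem_inter, Finset.mem_filter] at ha hb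
    have ha' := hg_eq i a ha.2
    have hb' := hg_eq i b hb.2
    have : (C i).toList.idxOf a = (C i).toList.idxOf b := by
      rw [← ha', ← hb', ha.1.2, hb.1.2]
    exact (List.idxOf_inj (Finset.mem_toList.2 ha.2)).1 this
  · intro j
    have hlen : (C ⟨0, hN⟩).toList.length = M := by
      rw [Finset.length_toList, hC1max]
    set l := (C ⟨0, hN⟩).toList with hl
    have hjlt : (j : ℕ) < l.length := by rw [hlen]; exact j.isLt
    set x := l.get ⟨j, hjlt⟩ with hx
    have hxC : x ∈ C ⟨0, hN⟩ := Finset.mem_toList.1 (l.get_mem _)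
    have hxT : x ∈ T := by
      rw [← hCcover]; exact Finset.mem_biUnion.mpr ⟨⟨0, hN⟩, Finset.mem_univ _, hxC⟩
    have hidx : l.idxOf x = (j : ℕ) := by
      have := List.get_idxOf ((C ⟨0, hN⟩).nodup_toList) ⟨j, hjlt⟩
      simpa [hx, ← hl] using this
    have hgx : g x = (j : ℕ) := by rw [hg_eq _ x hxC, ← hl, hidx]
    have hone : T.filter (fun y => g y = (j : ℕ)) ∩ C ⟨0, hN⟩ = {x} := by
      apply Finset.Subset.antisymm
      · intro b hb
        simp only [Finset.mem_inter, Finset.mem_filter] at hb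
        have hb' := hg_eq _ b hb.2
        have : l.idxOf b = l.idxOf x := by rw [hidx, ← hb', hb.1.2]
        have := (List.idxOf_inj (Finset.mem_toList.2 hb.2)).1 this
        simp [this]
      · intro b hb
        simp only [Finset.mem_singleton] at hb
        subst hb
        exact Finset.mem_inter.mpr ⟨Finset.mem_filter.mpr ⟨hxT, hgx⟩, hxC⟩
    rw [hone, Finset.card_singleton]
  · intro j x hx y hy hne
    simp only [Finset.mem_filter] at hx hy
    obtain ⟨i, hi⟩ := hmem_clique x hx.1
    obtain ⟨i', hi'⟩ := hmem_clique y hy.1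
    have hii' : i ≠ i' := by
      intro h
      subst h
      apply hne
      have : (C i).toList.idxOf x = (C i).toList.idxOf y := by
        rw [← hg_eq i x hi, ← hg_eq i y hi', hx.2, hy.2]
      exact (List.idxOf_inj (Finset.mem_toList.2 hi)).1 this
    exact hRcross i i' hii' x hi y hi'
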